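/- Every 2-dominating set of an outerplanar graph on n ≥ 3 vertices has at least ⌈(n+2)/3⌉ vertices, i.e., γ₂(G) ≥ ⌈(n+2)/3⌉. -/

import Mathlib

open SimpleGraph

variable {V : Type*}

/-- `S` is a total dominating set of `G`: every vertex has a neighbor in `S`. -/
def TotalDom (G : SimpleGraph V) (S : Set V) : Prop :=
  ∀ v : V, ∃ u ∈ S, G.Adj v u

/-- `v ∈ S` totally `S`-defends `u ∉ S`. -/
def Defends (G : SimpleGraph V) (S : Set V) (v u : V) : Prop :=
  G.Adj u v ∧ TotalDom G ((S \ {v}) ∪ {u})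

/-- `S` is a secure total dominating set of `G`. -/
def STDS (G : SimpleGraph V) (S : Set V) : Prop :=
  TotalDom G S ∧ ∀ u ∉ S, ∃ v ∈ S, Defends G S v u

/-- `S` is a 2-dominating set of `G`. -/
def TwoDom (G : SimpleGraph V) (S : Set V) : Prop :=
  ∀ v ∉ S, 2 ≤ (S ∩ G.neighborSet v).ncard

/-- external private neighborhood of `v` with respect to `S`. -/
def epn (G : SimpleGraph V) (v : V) (S : Set V) : Set V :=
  {w | w ∉ S ∧ G.neighborSet w ∩ S = {v}}

/-- internal private neighborhood of `v` with respect to `S`. -/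
def ipn (G : SimpleGraph V) (v : V) (S : Set V) : Set V :=
  {u | u ∈ S ∧ G.neighborSet u ∩ S = {v}}

/-- secure total domination number. -/
noncomputable def gammaSt (G : SimpleGraph V) : ℕ :=
  sInf {n | ∃ S : Set V, STDS G S ∧ S.ncard = n}

/-- `G` contains a subgraph that is a subdivision of `K`:  there is an injective map of
branch vertices together with pairwise internally disjoint paths joining them. -/
def ContainsSubdivision {W : Type*} (K : SimpleGraph W) (G : SimpleGraph V) : Prop :=
  ∃ (f : W → V) (p : ∀ a b, K.Adj a b → G.Walk (f a) (f b)),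
    Function.Injective f ∧
    (∀ a b (h : K.Adj a b), (p a b h).IsPath) ∧
    (∀ a b (h : K.Adj a b), ∀ w ∈ (p a b h).support, w ∈ Set.range f → w = f a ∨ w = f b) ∧
    (∀ a b c d (h₁ : K.Adj a b) (h₂ : K.Adj c d), s(a, b) ≠ s(c, d) →
      ∀ w, w ∈ (p a b h₁).support → w ∈ (p c d h₂).support → w ∈ Set.range f)

/-- outerplanar graphs: no subdivision of `K₄` nor of `K₂,₃` as a subgraph. -/
def Outerplanar (G : SimpleGraph V) : Prop :=
  ¬ ContainsSubdivision (completeGraph (Fin 4)) G ∧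
  ¬ ContainsSubdivision (completeBipartiteGraph (Fin 2) (Fin 3)) G

/-- maximal outerplanar graphs: adding any edge destroys outerplanarity. -/
def MaximalOuterplanar (G : SimpleGraph V) : Prop :=
  Outerplanar G ∧
  ∀ u v : V, u ≠ v → ¬ G.Adj u v →
    ¬ Outerplanar (G ⊔ SimpleGraph.fromEdgeSet {s(u, v)})

def Theta (G : SimpleGraph V) : Prop :=
  ∃ (x y : V) (p₁ p₂ p₃ : G.Walk x y), x ≠ y ∧
    p₁.IsPath ∧ p₂.IsPath ∧ p₃.IsPath ∧
    2 ≤ p₁.length ∧ 2 ≤ p₂.length ∧ 2 ≤ p₃.length ∧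
    (∀ w ∈ p₁.support, w ∈ p₂.support → w = x ∨ w = y) ∧
    (∀ w ∈ p₁.support, w ∈ p₃.support → w = x ∨ w = y) ∧
    (∀ w ∈ p₂.support, w ∈ p₃.support → w = x ∨ w = y)


lemma walk_len2 {H : SimpleGraph V} {Bs : Finset V}
    (hadj : ∀ u w, H.Adj u w → u ∈ Bs ∨ w ∈ Bs) {u w : V} (p : H.Walk u w)
    (hu : u ∉ Bs) (hw : w ∉ Bs) (huw : u ≠ w) : 2 ≤ p.length := by
  cases p with
  | nil => exact absurd rfl huw
  | cons h q =>
    cases q with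
    | nil => rcases hadj _ _ h with h' | h' <;> [exact absurd h' hu; exact absurd h' hw]
    | cons h' q' => simp [Walk.length_cons]

lemma mem_take_drop {H : SimpleGraph V} [DecidableEq V] {u v w : V} {p : H.Walk u v}
    (hp : p.IsPath) (h : w ∈ p.support) {z : V}
    (h1 : z ∈ (p.takeUntil w h).support) (h2 : z ∈ (p.dropUntil w h).support) : z = w := by
  by_contra hzw
  have hnd : p.support.Nodup := hp.support_nodup
  rw [← Walk.take_spec p h, Walk.support_append, List.nodup_append] at hnd
  have h2' : z ∈ (p.dropUntil w h).support.tail := by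
    rw [Walk.support_eq_cons (p.dropUntil w h), List.mem_cons] at h2
    rcases h2 with h2 | h2
    · exact absurd h2 hzw
    · exact h2
  exact hnd.2.2 z h1 z h2' rfl

lemma drop_dichotomy {H : SimpleGraph V} [DecidableEq V] :
    ∀ {u v : V} (p : H.Walk u v) (s s' : V) (hs : s ∈ p.support) (hs' : s' ∈ p.support),
    s' ∈ (p.dropUntil s hs).support ∨ s ∈ (p.dropUntil s' hs').support := by
  intro u v p
  induction p with
  | nil =>
    intro s s' hs hs'
    rw [Walk.mem_support_nil_iff] at hs hs'
    subst hs; subst hs'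
    left; exact Walk.start_mem_support _
  | @cons a b c h q ih =>
    intro s s' hs hs'
    by_cases has : a = s
    · left
      subst has
      rw [Walk.dropUntil]
      simp only [dif_pos rfl]
      exact hs'
    · by_cases has' : a = s'
      · right
        subst has'
        rw [Walk.dropUntil]
        simp only [dif_pos rfl]
        exact hs
      · have hsq : s ∈ q.support := by
          rw [Walk.support_cons, List.mem_cons] at hs
          rcases hs with h' | h'
          · exact absurd h'.symm has
          · exact h'
        have hsq' : s' ∈ q.support := by
          rw [Walk.support_cons, List.mem_cons] at hs'
          rcases hs' with h' | h'
          · exact absurd h'.symm has'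
          · exact h'
        have e1 : (Walk.cons h q).dropUntil s hs = q.dropUntil s hsq := by
          rw [Walk.dropUntil]
          simp only [dif_neg has]
        have e2 : (Walk.cons h q).dropUntil s' hs' = q.dropUntil s' hsq' := by
          rw [Walk.dropUntil]
          simp only [dif_neg has']
        rw [e1, e2]
        exact ih s s' hsq hsq'

section Cases
variable {H : SimpleGraph V} [DecidableEq V] {Bs : Finset V}
  {y x : V} {p : H.Walk y x}

/-- two distinct off-path B-vertices attached to `y` and to the same `s` on the path -/
lemma caseA1 (hadj : ∀ u w, H.Adj u w → u ∈ Bs ∨ w ∈ Bs) (hp : p.IsPath) (hyBs : y ∉ Bs)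
    {b b' s : V} (hsBs : s ∉ Bs) (hbBs : b ∈ Bs) (hb'Bs : b' ∈ Bs)
    (hbb' : b ≠ b') (hbp : b ∉ p.support) (hb'p : b' ∉ p.support)
    (hyb : H.Adj y b) (hbs : H.Adj b s) (hyb' : H.Adj y b') (hb's : H.Adj b' s)
    (hs : s ∈ p.support) (hsy : s ≠ y) : Theta H := by
  have hys : y ≠ s := Ne.symm hsy
  have hbne : b ≠ s := fun h => hsBs (h ▸ hbBs)
  have hb'ne : b' ≠ s := fun h => hsBs (h ▸ hb'Bs)
  have hyb_ne : y ≠ b := hyb.ne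
  have hyb'_ne : y ≠ b' := hyb'.ne
  refine ⟨y, s, p.takeUntil s hs,
    Walk.cons hyb (Walk.cons hbs Walk.nil),
    Walk.cons hyb' (Walk.cons hb's Walk.nil), hys,
    hp.takeUntil hs, ?_, ?_,
    walk_len2 hadj _ hyBs hsBs hys, by simp, by simp, ?_, ?_, ?_⟩
  · simp [Walk.cons_isPath_iff, hbne, hyb_ne, hys]
  · simp [Walk.cons_isPath_iff, hb'ne, hyb'_ne, hys]
  · intro w hw1 hw2
    simp only [Walk.support_cons, Walk.support_nil, List.mem_cons,
      List.not_mem_nil, or_false] at hw2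
    rcases hw2 with rfl | rfl | rfl
    · exact Or.inl rfl
    · exact absurd (Walk.support_takeUntil_subset _ hs hw1) hbp
    · exact Or.inr rfl
  · intro w hw1 hw2
    simp only [Walk.support_cons, Walk.support_nil, List.mem_cons,
      List.not_mem_nil, or_false] at hw2
    rcases hw2 with rfl | rfl | rfl
    · exact Or.inl rfl
    · exact absurd (Walk.support_takeUntil_subset _ hs hw1) hb'p
    · exact Or.inr rfl
  · intro w hw1 hw2
    simp only [Walk.support_cons, Walk.support_nil, List.mem_cons,
      List.not_mem_nil, or_false] at hw1 hw2
    rcases hw1 with rfl | rfl | rfl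
    · exact Or.inl rfl
    · rcases hw2 with h | h | h
      · exact absurd h.symm hyb_ne
      · exact absurd h hbb'
      · exact absurd h hbne
    · exact Or.inr rfl

/-- two distinct off-path B-vertices attached to `y` and to distinct `s, s'` on the path,
with `s'` after `s`. -/
lemma caseA2 (hadj : ∀ u w, H.Adj u w → u ∈ Bs ∨ w ∈ Bs) (hp : p.IsPath) (hyBs : y ∉ Bs)
    {b b' s s' : V} (hsBs : s ∉ Bs) (hs'Bs : s' ∉ Bs) (hbBs : b ∈ Bs) (hb'Bs : b' ∈ Bs)
    (hbb' : b ≠ b') (hbp : b ∉ p.support) (hb'p : b' ∉ p.support)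
    (hyb : H.Adj y b) (hbs : H.Adj b s) (hyb' : H.Adj y b') (hb's' : H.Adj b' s')
    (hs : s ∈ p.support) (hsy : s ≠ y) (hs'y : s' ≠ y) (hss' : s ≠ s')
    (horder : s' ∈ (p.dropUntil s hs).support) : Theta H := by
  have hys : y ≠ s := Ne.symm hsy
  set t := p.takeUntil s hs with ht
  set d := p.dropUntil s hs with hd
  set dt := d.takeUntil s' horder with hdt
  have hdtp : dt.support ⊆ p.support := fun w hw =>
    Walk.support_dropUntil_subset _ hs (Walk.support_takeUntil_subset _ horder hw)
  have hynd : y ∉ d.support := by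
    intro hyd
    exact hsy (mem_take_drop hp hs (Walk.start_mem_support t) hyd).symm
  have hyndt : y ∉ dt.support := fun h => hynd (Walk.support_takeUntil_subset _ horder h)
  have hbne : b ≠ s := fun h => hsBs (h ▸ hbBs)
  have hyb_ne : y ≠ b := hyb.ne
  have hyb'_ne : y ≠ b' := hyb'.ne
  have hb'dt : b' ∉ dt.reverse.support := by
    rw [Walk.support_reverse, List.mem_reverse]
    exact fun h => hb'p (hdtp h)
  refine ⟨y, s, t,
    Walk.cons hyb (Walk.cons hbs Walk.nil),
    Walk.cons hyb' (Walk.cons hb's' dt.reverse), hys,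
    hp.takeUntil hs, ?_, ?_,
    walk_len2 hadj _ hyBs hsBs hys, by simp, ?_, ?_, ?_, ?_⟩
  · simp [Walk.cons_isPath_iff, hbne, hyb_ne, hys]
  · rw [Walk.cons_isPath_iff, Walk.cons_isPath_iff]
    refine ⟨⟨((hp.dropUntil hs).takeUntil horder).reverse, hb'dt⟩, ?_⟩
    simp only [Walk.support_cons, List.mem_cons, not_or]
    refine ⟨hyb'_ne, ?_⟩
    rw [Walk.support_reverse, List.mem_reverse]
    exact hyndt
  · simp only [Walk.length_cons]
    omega
  · intro w hw1 hw2
    simp only [Walk.support_cons, Walk.support_nil, List.mem_cons,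
      List.not_mem_nil, or_false] at hw2
    rcases hw2 with rfl | rfl | rfl
    · exact Or.inl rfl
    · exact absurd (Walk.support_takeUntil_subset _ hs hw1) hbp
    · exact Or.inr rfl
  · intro w hw1 hw2
    simp only [Walk.support_cons, List.mem_cons] at hw2
    rcases hw2 with rfl | rfl | h
    · exact Or.inl rfl
    · exact absurd (Walk.support_takeUntil_subset _ hs hw1) hb'p
    · rw [Walk.support_reverse, List.mem_reverse] at h
      exact Or.inr (mem_take_drop hp hs hw1 (Walk.support_takeUntil_subset _ horder h))
  · intro w hw1 hw2
    simp only [Walk.support_cons, Walk.support_nil, List.mem_cons,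
      List.not_mem_nil, or_false] at hw1
    simp only [Walk.support_cons, List.mem_cons] at hw2
    rcases hw1 with rfl | rfl | rfl
    · exact Or.inl rfl
    · rcases hw2 with h | h | h
      · exact absurd h.symm hyb_ne
      · exact absurd h hbb'
      · rw [Walk.support_reverse, List.mem_reverse] at h
        exact absurd (hdtp h) hbp
    · exact Or.inr rfl

/-- the cycle case: the end `x` of the path is adjacent to `y`, plus one off-path B-vertex. -/
lemma caseB (hadj : ∀ u w, H.Adj u w → u ∈ Bs ∨ w ∈ Bs) (hp : p.IsPath) (hyBs : y ∉ Bs)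
    {b s : V} (hsBs : s ∉ Bs) (hbBs : b ∈ Bs) (hxBs : x ∈ Bs)
    (hbp : b ∉ p.support) (hyx : H.Adj y x)
    (hyb : H.Adj y b) (hbs : H.Adj b s)
    (hs : s ∈ p.support) (hsy : s ≠ y) : Theta H := by
  have hys : y ≠ s := Ne.symm hsy
  have hsx : s ≠ x := fun h => hsBs (h ▸ hxBs)
  set t := p.takeUntil s hs with ht
  set d := p.dropUntil s hs with hd
  have hynd : y ∉ d.support := by
    intro hyd
    exact hsy (mem_take_drop hp hs (Walk.start_mem_support t) hyd).symm
  have hbne : b ≠ s := fun h => hsBs (h ▸ hbBs)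
  have hyb_ne : y ≠ b := hyb.ne
  have hdlen : 1 ≤ d.length := by
    by_contra hl
    push_neg at hl
    interval_cases h : d.length
    · exact hsx (Walk.eq_of_length_eq_zero h)
  refine ⟨y, s, t,
    Walk.cons hyb (Walk.cons hbs Walk.nil),
    Walk.cons hyx d.reverse, hys,
    hp.takeUntil hs, ?_, ?_,
    walk_len2 hadj _ hyBs hsBs hys, by simp, ?_, ?_, ?_, ?_⟩
  · simp [Walk.cons_isPath_iff, hbne, hyb_ne, hys]
  · rw [Walk.cons_isPath_iff]
    refine ⟨(hp.dropUntil hs).reverse, ?_⟩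
    rw [Walk.support_reverse, List.mem_reverse]
    exact hynd
  · simp only [Walk.length_cons, Walk.length_reverse]
    omega
  · intro w hw1 hw2
    simp only [Walk.support_cons, Walk.support_nil, List.mem_cons,
      List.not_mem_nil, or_false] at hw2
    rcases hw2 with rfl | rfl | rfl
    · exact Or.inl rfl
    · exact absurd (Walk.support_takeUntil_subset _ hs hw1) hbp
    · exact Or.inr rfl
  · intro w hw1 hw2
    simp only [Walk.support_cons, List.mem_cons] at hw2
    rcases hw2 with rfl | h
    · exact Or.inl rfl
    · rw [Walk.support_reverse, List.mem_reverse] at h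
      exact Or.inr (mem_take_drop hp hs hw1 h)
  · intro w hw1 hw2
    simp only [Walk.support_cons, Walk.support_nil, List.mem_cons,
      List.not_mem_nil, or_false] at hw1
    simp only [Walk.support_cons, List.mem_cons] at hw2
    rcases hw1 with rfl | rfl | rfl
    · exact Or.inl rfl
    · rcases hw2 with h | h
      · exact absurd h.symm hyb_ne
      · rw [Walk.support_reverse, List.mem_reverse] at h
        exact absurd (Walk.support_dropUntil_subset _ hs h) hbp
    · exact Or.inr rfl

end Cases

lemma exists_pred {H : SimpleGraph V} {c b : V} (t : H.Walk c b) (hcb : c ≠ b) :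
    ∃ w : V, H.Adj w b ∧ w ∈ t.support := by
  induction t with
  | nil => exact absurd rfl hcb
  | @cons u v d h q ih =>
    by_cases hvb : v = d
    · subst hvb
      exact ⟨u, h, by simp⟩
    · obtain ⟨w, hw1, hw2⟩ := ih hvb
      exact ⟨w, hw1, by simp [hw2]⟩

lemma exists_succ {H : SimpleGraph V} {b c : V} (d : H.Walk b c) (hbx : b ≠ c) :
    ∃ z : V, H.Adj b z ∧ z ∈ d.support.tail := by
  cases d with
  | nil => exact absurd rfl hbx
  | cons h d' => exact ⟨_, h, by simp⟩

lemma second_or_last {H : SimpleGraph V} [DecidableEq V] {y x b m₁ m₂ : V}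
    (p : H.Walk y x) (hp : p.IsPath) (hbp : b ∈ p.support) (hby : b ≠ y)
    (hnbr : ∀ w, H.Adj b w → w = m₁ ∨ w = m₂)
    (hy : y = m₁ ∨ y = m₂) :
    b = x ∨ b = p.getVert 1 := by
  cases p with
  | nil =>
    rw [Walk.mem_support_nil_iff] at hbp
    exact absurd hbp hby
  | @cons y c x h q =>
    have hq : q.IsPath := ((Walk.cons_isPath_iff _ _).mp hp).1
    have hyq : y ∉ q.support := ((Walk.cons_isPath_iff _ _).mp hp).2
    have hbq : b ∈ q.support := by
      rw [Walk.support_cons, List.mem_cons] at hbp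
      rcases hbp with h' | h'
      · exact absurd h' hby
      · exact h'
    by_cases hbc : b = c
    · right
      rw [Walk.getVert_cons_succ]
      simpa using hbc
    · by_cases hbx : b = x
      · exact Or.inl hbx
      · exfalso
        have hcb : c ≠ b := fun h' => hbc h'.symm
        set t := q.takeUntil b hbq with hts
        set d := q.dropUntil b hbq with hds
        obtain ⟨w, hwadj, hwt⟩ := exists_pred t hcb
        obtain ⟨z, hzadj, hzt⟩ := exists_succ d hbx
        have hnd : q.support.Nodup := hq.support_nodup
        rw [← Walk.take_spec q hbq, Walk.support_append, List.nodup_append] at hnd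
        have hwz : w ≠ z := fun h' => hnd.2.2 w hwt z hzt h'
        have hwq : w ∈ q.support := Walk.support_takeUntil_subset _ hbq hwt
        have hzq : z ∈ q.support :=
          Walk.support_dropUntil_subset _ hbq (List.mem_of_mem_tail hzt)
        have hyw : y ≠ w := fun h' => hyq (h' ▸ hwq)
        have hyz : y ≠ z := fun h' => hyq (h' ▸ hzq)
        have hw12 := hnbr w hwadj.symm
        have hz12 := hnbr z hzadj
        rcases hw12 with rfl | rfl <;> rcases hz12 with rfl | rfl <;>
          rcases hy with rfl | rfl <;>
          first
            | exact hwz rfl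
            | exact hyw rfl
            | exact hyz rfl

lemma three_distinct {T : Finset V} (h : 3 ≤ T.card) :
    ∃ a ∈ T, ∃ b ∈ T, ∃ c ∈ T, a ≠ b ∧ a ≠ c ∧ b ≠ c := by
  classical
  obtain ⟨U, hUT, hU3⟩ := Finset.exists_subset_card_eq h
  obtain ⟨a, b, c, hab, hac, hbc, rfl⟩ := Finset.card_eq_three.mp hU3
  exact ⟨a, hUT (by simp), b, hUT (by simp), c, hUT (by simp), hab, hac, hbc⟩


lemma buildK23 (G : SimpleGraph V) (x y : V) (hxy : x ≠ y)
    (m : Fin 3 → V) (hA : ∀ j, G.Adj x (m j)) (q : ∀ j, G.Walk (m j) y)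
    (hq : ∀ j, (q j).IsPath)
    (hxq : ∀ j, x ∉ (q j).support)
    (hmy : ∀ j, m j ≠ y)
    (hdisj : ∀ j k, j ≠ k → ∀ w, w ∈ (Walk.cons (hA j) (q j)).support →
       w ∈ (Walk.cons (hA k) (q k)).support → w = x ∨ w = y) :
    ContainsSubdivision (completeBipartiteGraph (Fin 2) (Fin 3)) G := by
  have hmx : ∀ j, m j ≠ x := fun j => (hA j).ne'
  have hmm : ∀ j k, j ≠ k → m j ≠ m k := by
    intro j k hjk he
    rcases hdisj j k hjk (m j) (by simp) (by simp [he, Walk.start_mem_support]) with h | h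
    · exact hmx j h
    · exact hmy j h
  have hqq : ∀ j k, j ≠ k → ∀ w, w ∈ (q j).support → w ∈ (q k).support → w = x ∨ w = y := by
    intro j k hjk w h1 h2
    exact hdisj j k hjk w (by simp [h1]) (by simp [h2])
  have hmq : ∀ j k, j ≠ k → m j ∉ (q k).support := by
    intro j k hjk hin
    rcases hdisj j k hjk (m j) (by simp) (by simp [hin]) with h | h
    · exact hmx j h
    · exact hmy j h
  refine ⟨(fun a => match a with
    | Sum.inl ⟨0, _⟩ => x
    | Sum.inl ⟨1, _⟩ => y
    | Sum.inr j => m j),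
    (fun a b h => match a, b, h with
    | Sum.inl ⟨0, _⟩, Sum.inr j, _ => Walk.cons (hA j) Walk.nil
    | Sum.inl ⟨1, _⟩, Sum.inr j, _ => (q j).reverse
    | Sum.inr j, Sum.inl ⟨0, _⟩, _ => (Walk.cons (hA j) Walk.nil).reverse
    | Sum.inr j, Sum.inl ⟨1, _⟩, _ => q j
    | Sum.inl ⟨n+2, h2⟩, Sum.inr _, _ => absurd h2 (by omega)
    | Sum.inr _, Sum.inl ⟨n+2, h2⟩, _ => absurd h2 (by omega)
    | Sum.inl _, Sum.inl _, h => absurd h (by simp [completeBipartiteGraph])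
    | Sum.inr _, Sum.inr _, h => absurd h (by simp [completeBipartiteGraph])),
    ?_, ?_, ?_, ?_⟩
  · -- injective
    rintro (⟨iv, hi⟩ | j) (⟨iv', hi'⟩ | j') hab
    · interval_cases iv <;> interval_cases iv' <;> first | rfl | (exact absurd hab hxy) | (exact absurd hab.symm hxy)
    · interval_cases iv <;> dsimp at hab
      · exact absurd hab.symm (hmx j')
      · exact absurd hab.symm (hmy j')
    · interval_cases iv' <;> dsimp at hab
      · exact absurd hab (hmx j)
      · exact absurd hab (hmy j)
    · dsimp at hab
      by_contra hne
      have : j ≠ j' := fun hEq => hne (by rw [hEq])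
      exact hmm j j' this hab
  · -- paths
    rintro (⟨iv, hi⟩ | j) (⟨iv', hi'⟩ | j') h
    · exfalso; revert h; simp [completeBipartiteGraph]
    · interval_cases iv
      · simp [Walk.cons_isPath_iff, (hmx j').symm]
      · exact (hq j').reverse
    · interval_cases iv'
      · exact ((by simp [Walk.cons_isPath_iff, (hmx j).symm] :
          (Walk.cons (hA j) Walk.nil).IsPath)).reverse
      · exact hq j
    · exfalso; revert h; simp [completeBipartiteGraph]
  · -- condition 3
    have hrange : ∀ w : V, w ∈ Set.range (fun a : Fin 2 ⊕ Fin 3 => match a with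
        | Sum.inl ⟨0, _⟩ => x
        | Sum.inl ⟨1, _⟩ => y
        | Sum.inr j => m j) → w = x ∨ w = y ∨ ∃ k, w = m k := by
      rintro w ⟨a, rfl⟩
      rcases a with (⟨av, hav⟩ | k)
      · interval_cases av
        · exact Or.inl rfl
        · exact Or.inr (Or.inl rfl)
      · exact Or.inr (Or.inr ⟨k, rfl⟩)
    rintro (⟨iv, hi⟩ | j) (⟨iv', hi'⟩ | j') h w hw hr
    · exfalso; revert h; simp [completeBipartiteGraph]
    · interval_cases iv <;> dsimp at hw ⊢
      · simp only [Walk.support_cons, Walk.support_nil, List.mem_cons,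
          List.mem_singleton, List.not_mem_nil, or_false] at hw
        tauto
      · rw [Walk.support_reverse, List.mem_reverse] at hw
        rcases hrange w hr with rfl | rfl | ⟨k, rfl⟩
        · exact absurd hw (hxq j')
        · exact Or.inl rfl
        · by_cases hk : k = j'
          · subst hk; exact Or.inr rfl
          · exact absurd hw (hmq k j' hk)
    · interval_cases iv' <;> dsimp at hw ⊢
      · simp only [Walk.support_cons, Walk.support_nil, List.mem_cons,
          List.mem_singleton, List.not_mem_nil, or_false] at hw
        tauto
      · rcases hrange w hr with rfl | rfl | ⟨k, rfl⟩
        · exact absurd hw (hxq j)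
        · exact Or.inr rfl
        · by_cases hk : k = j
          · subst hk; exact Or.inl rfl
          · exact absurd hw (hmq k j hk)
    · exfalso; revert h; simp [completeBipartiteGraph]
  · -- condition 4
    have hxr : x ∈ Set.range (fun a : Fin 2 ⊕ Fin 3 => match a with
      | Sum.inl ⟨0, _⟩ => x
      | Sum.inl ⟨1, _⟩ => y
      | Sum.inr j => m j) := ⟨Sum.inl 0, rfl⟩
    have hyr : y ∈ Set.range (fun a : Fin 2 ⊕ Fin 3 => match a with
      | Sum.inl ⟨0, _⟩ => x
      | Sum.inl ⟨1, _⟩ => y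
      | Sum.inr j => m j) := ⟨Sum.inl 1, rfl⟩
    have hmr : ∀ j, m j ∈ Set.range (fun a : Fin 2 ⊕ Fin 3 => match a with
      | Sum.inl ⟨0, _⟩ => x
      | Sum.inl ⟨1, _⟩ => y
      | Sum.inr j => m j) := fun j => ⟨Sum.inr j, rfl⟩
    have edge0 : ∀ (j : Fin 3) (w : V), w ∈ (Walk.cons (hA j) Walk.nil).support →
        w ∈ Set.range (fun a : Fin 2 ⊕ Fin 3 => match a with
      | Sum.inl ⟨0, _⟩ => x
      | Sum.inl ⟨1, _⟩ => y
      | Sum.inr j => m j) := by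
      intro j w hw
      simp only [Walk.support_cons, Walk.support_nil, List.mem_cons,
        List.mem_singleton, List.not_mem_nil, or_false] at hw
      rcases hw with rfl | rfl
      · exact hxr
      · exact hmr j
    have key : ∀ (j k : Fin 3), j ≠ k → ∀ w, w ∈ (q j).support → w ∈ (q k).support →
        w ∈ Set.range (fun a : Fin 2 ⊕ Fin 3 => match a with
      | Sum.inl ⟨0, _⟩ => x
      | Sum.inl ⟨1, _⟩ => y
      | Sum.inr j => m j) := by
      intro j k hjk w h1 h2
      rcases hqq j k hjk w h1 h2 with rfl | rfl
      · exact hxr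
      · exact hyr
    rintro (⟨iv, hi⟩ | j) (⟨iv', hi'⟩ | j') (⟨cv, hc⟩ | k) (⟨cv', hc'⟩ | k') h₁ h₂ hne w hw₁ hw₂
    all_goals first
      | (exfalso; revert h₁; simp [completeBipartiteGraph]; done)
      | (exfalso; revert h₂; simp [completeBipartiteGraph]; done)
      | skip
    · -- (inl iv, inr j') vs (inl cv, inr k')
      interval_cases iv <;> interval_cases cv <;> dsimp at hw₁ hw₂
      · exact edge0 j' w hw₁
      · exact edge0 j' w hw₁
      · exact edge0 k' w hw₂
      · rw [Walk.support_reverse, List.mem_reverse] at hw₁ hw₂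
        have hjk : j' ≠ k' := fun hEq => hne (by rw [hEq])
        exact key j' k' hjk w hw₁ hw₂
    · -- (inl iv, inr j') vs (inr k, inl cv')
      interval_cases iv <;> interval_cases cv' <;> dsimp at hw₁ hw₂
      · exact edge0 j' w hw₁
      · exact edge0 j' w hw₁
      · have hw₂ : w ∈ (Walk.cons (hA k) Walk.nil).support := by
          simp only [Walk.support_cons, Walk.support_nil, List.mem_cons, List.not_mem_nil, or_false] at hw₂ ⊢
          tauto
        exact edge0 k w hw₂
      · rw [Walk.support_reverse, List.mem_reverse] at hw₁
        have hjk : j' ≠ k := fun hEq => hne (by rw [hEq, Sym2.eq_swap])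
        exact key j' k hjk w hw₁ hw₂
    · -- (inr j, inl iv') vs (inl cv, inr k')
      interval_cases iv' <;> interval_cases cv <;> dsimp at hw₁ hw₂
      · have hw₁ : w ∈ (Walk.cons (hA j) Walk.nil).support := by
          simp only [Walk.support_cons, Walk.support_nil, List.mem_cons, List.not_mem_nil, or_false] at hw₁ ⊢
          tauto
        exact edge0 j w hw₁
      · have hw₁ : w ∈ (Walk.cons (hA j) Walk.nil).support := by
          simp only [Walk.support_cons, Walk.support_nil, List.mem_cons, List.not_mem_nil, or_false] at hw₁ ⊢
          tauto
        exact edge0 j w hw₁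
      · exact edge0 k' w hw₂
      · rw [Walk.support_reverse, List.mem_reverse] at hw₂
        have hjk : j ≠ k' := fun hEq => hne (by rw [hEq, Sym2.eq_swap])
        exact key j k' hjk w hw₁ hw₂
    · -- (inr j, inl iv') vs (inr k, inl cv')
      interval_cases iv' <;> interval_cases cv' <;> dsimp at hw₁ hw₂
      · have hw₁ : w ∈ (Walk.cons (hA j) Walk.nil).support := by
          simp only [Walk.support_cons, Walk.support_nil, List.mem_cons, List.not_mem_nil, or_false] at hw₁ ⊢
          tauto
        exact edge0 j w hw₁
      · have hw₁ : w ∈ (Walk.cons (hA j) Walk.nil).support := by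
          simp only [Walk.support_cons, Walk.support_nil, List.mem_cons, List.not_mem_nil, or_false] at hw₁ ⊢
          tauto
        exact edge0 j w hw₁
      · have hw₂ : w ∈ (Walk.cons (hA k) Walk.nil).support := by
          simp only [Walk.support_cons, Walk.support_nil, List.mem_cons, List.not_mem_nil, or_false] at hw₂ ⊢
          tauto
        exact edge0 k w hw₂
      · have hjk : j ≠ k := fun hEq => hne (by rw [hEq])
        exact key j k hjk w hw₁ hw₂

lemma theta_decomp {G : SimpleGraph V} {x y : V} (p : G.Walk x y) (hp : p.IsPath)
    (hl : 2 ≤ p.length) :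
    ∃ (mj : V) (h : G.Adj x mj) (qj : G.Walk mj y), p = Walk.cons h qj := by
  cases p with
  | nil => simp at hl
  | cons h q => exact ⟨_, h, q, rfl⟩


lemma theta_csd {G : SimpleGraph V} (h : Theta G) :
    ContainsSubdivision (completeBipartiteGraph (Fin 2) (Fin 3)) G := by
  obtain ⟨x, y, p₁, p₂, p₃, hxy, h1, h2, h3, l1, l2, l3, d12, d13, d23⟩ := h
  set P : Fin 3 → G.Walk x y := ![p₁, p₂, p₃] with hPdef
  have hP : ∀ j, (P j).IsPath := by
    intro j; fin_cases j <;> simpa [P]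
  have hL : ∀ j, 2 ≤ (P j).length := by
    intro j; fin_cases j <;> simpa [P]
  have hD : ∀ j k, j ≠ k → ∀ w, w ∈ (P j).support → w ∈ (P k).support → w = x ∨ w = y := by
    intro j k hjk w hj hk
    fin_cases j <;> fin_cases k <;>
      simp only [hPdef, Matrix.cons_val_zero, Matrix.cons_val_one, Matrix.head_cons,
        Matrix.cons_val_two, Matrix.tail_cons] at hj hk <;>
      first
        | exact absurd rfl hjk
        | exact d12 w hj hk
        | exact d13 w hj hk
        | exact d23 w hj hk
        | exact d12 w hk hj
        | exact d13 w hk hj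
        | exact d23 w hk hj
  have hdec : ∀ j, ∃ (mj : V) (h : G.Adj x mj) (qj : G.Walk mj y), P j = Walk.cons h qj :=
    fun j => theta_decomp (P j) (hP j) (hL j)
  choose m hA q hPq using hdec
  have hcons : ∀ j, (Walk.cons (hA j) (q j)).IsPath := fun j => hPq j ▸ hP j
  have hq' : ∀ j, (q j).IsPath := fun j => ((Walk.cons_isPath_iff _ _).1 (hcons j)).1
  have hxq : ∀ j, x ∉ (q j).support := fun j => ((Walk.cons_isPath_iff _ _).1 (hcons j)).2
  have hmy : ∀ j, m j ≠ y := by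
    intro j hEq
    have h2' : 2 ≤ (Walk.cons (hA j) (q j)).length := hPq j ▸ hL j
    have : ((q j).copy hEq rfl).IsPath := (Walk.isPath_copy _ _ _).2 (hq' j)
    rw [Walk.isPath_iff_eq_nil] at this
    have : (q j).length = 0 := by
      have := congrArg Walk.length this
      simpa using this
    simp [Walk.length_cons, this] at h2'
  exact buildK23 G x y hxy m hA q hq' hxq hmy
    (fun j k hjk w hwj hwk => hD j k hjk w (by rw [hPq j]; exact hwj) (by rw [hPq k]; exact hwk))

lemma mindeg_theta [Fintype V] [DecidableEq V] (G : SimpleGraph V) (S B : Finset V)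
    (n₁ n₂ : V → V)
    (hBS : ∀ x ∈ B, x ∉ S)
    (h1 : ∀ x ∈ B, n₁ x ∈ S ∧ G.Adj x (n₁ x))
    (h2 : ∀ x ∈ B, n₂ x ∈ S ∧ G.Adj x (n₂ x))
    (hne12 : ∀ x ∈ B, n₁ x ≠ n₂ x)
    (hSne : S.Nonempty)
    (hmin : ∀ v ∈ S, 3 ≤ (B.filter (fun x => n₁ x = v ∨ n₂ x = v)).card) :
    Theta G := by
  classical
  set H : SimpleGraph V := SimpleGraph.fromRel (fun u w => u ∈ B ∧ (w = n₁ u ∨ w = n₂ u))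
    with hHdef
  -- basic adjacency facts
  have hBadj : ∀ b ∈ B, ∀ w, w = n₁ b ∨ w = n₂ b → H.Adj b w := by
    intro b hb w hw
    refine ⟨?_, Or.inl ⟨hb, hw⟩⟩
    rcases hw with rfl | rfl
    · exact fun h' => hBS b hb (h' ▸ (h1 b hb).1)
    · exact fun h' => hBS b hb (h' ▸ (h2 b hb).1)
  have hnbrB : ∀ b ∈ B, ∀ w, H.Adj b w → w = n₁ b ∨ w = n₂ b := by
    intro b hb w hw
    rcases hw with ⟨hne', ⟨_, h'⟩ | ⟨hwB, h'⟩⟩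
    · exact h'
    · exfalso
      rcases h' with h' | h'
      · exact hBS b hb (h' ▸ (h1 w hwB).1)
      · exact hBS b hb (h' ▸ (h2 w hwB).1)
  have hadjB : ∀ u w, H.Adj u w → u ∈ B ∨ w ∈ B := by
    rintro u w ⟨hne', ⟨hu, _⟩ | ⟨hw, _⟩⟩
    · exact Or.inl hu
    · exact Or.inr hw
  have hHG : H ≤ G := by
    rintro u w ⟨hne', ⟨hu, h'⟩ | ⟨hw, h'⟩⟩
    · rcases h' with rfl | rfl
      · exact (h1 u hu).2
      · exact (h2 u hu).2
    · rcases h' with rfl | rfl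
      · exact (h1 w hw).2.symm
      · exact (h2 w hw).2.symm
  have hSB : ∀ v ∈ S, v ∉ B := fun v hv hvB => hBS v hvB hv
  -- maximal path starting in S
  set Lset : Set ℕ :=
    {l | ∃ (y x : V) (p : H.Walk y x), p.IsPath ∧ y ∈ S ∧ p.length = l} with hLdef
  have h0 : (0 : ℕ) ∈ Lset := by
    obtain ⟨v, hv⟩ := hSne
    exact ⟨v, v, Walk.nil, Walk.IsPath.nil, hv, rfl⟩
  have hbdd : BddAbove Lset := by
    refine ⟨Fintype.card V, ?_⟩
    rintro l ⟨y, x, p, hp, _, rfl⟩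
    exact le_of_lt hp.length_lt
  obtain ⟨y, x, p, hp, hyS, hplen⟩ := Nat.sSup_mem ⟨0, h0⟩ hbdd
  have hmax : ∀ (y' x' : V) (p' : H.Walk y' x'), p'.IsPath → y' ∈ S →
      p'.length ≤ sSup Lset :=
    fun y' x' p' hp' hy' => le_csSup hbdd ⟨y', x', p', hp', hy', rfl⟩
  -- the three neighbours of y
  set T : Finset V := B.filter (fun b => n₁ b = y ∨ n₂ b = y) with hTdef
  have hTB : ∀ b ∈ T, b ∈ B := fun b hb => (Finset.mem_filter.mp hb).1
  have hTy : ∀ b ∈ T, H.Adj y b := by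
    intro b hb
    obtain ⟨hbB, h'⟩ := Finset.mem_filter.mp hb
    have := hBadj b hbB y (by rcases h' with h' | h' <;> [exact Or.inl h'.symm; exact Or.inr h'.symm])
    exact this.symm
  -- the other neighbour of b
  set oth : V → V := fun b => if n₁ b = y then n₂ b else n₁ b with hothdef
  have hoth : ∀ b ∈ T, oth b ∈ S ∧ H.Adj b (oth b) ∧ oth b ≠ y := by
    intro b hb
    obtain ⟨hbB, h'⟩ := Finset.mem_filter.mp hb
    by_cases hc : n₁ b = y
    · refine ⟨by simp [hothdef, hc, (h2 b hbB).1], ?_, ?_⟩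
      · simp only [hothdef, hc, if_pos]
        exact hBadj b hbB _ (Or.inr rfl)
      · simp only [hothdef, hc, if_pos]
        exact fun h'' => hne12 b hbB (hc.trans h''.symm)
    · refine ⟨by simp [hothdef, hc, (h1 b hbB).1], ?_, ?_⟩
      · simp only [hothdef, if_neg hc]
        exact hBadj b hbB _ (Or.inl rfl)
      · simp only [hothdef, if_neg hc]
        exact hc
  -- classification of neighbours off the path
  have cls : ∀ b ∈ T, b ∉ p.support → oth b ∈ p.support := by
    intro b hb hbp
    by_contra hop
    have hyb := hTy b hb
    obtain ⟨hoS, hbo, hoy⟩ := hoth b hb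
    have hp1 : (Walk.cons hyb.symm p).IsPath := by
      rw [Walk.cons_isPath_iff]; exact ⟨hp, hbp⟩
    have hop1 : oth b ∉ (Walk.cons hyb.symm p).support := by
      rw [Walk.support_cons, List.mem_cons]
      push_neg
      refine ⟨fun h' => ?_, hop⟩
      exact hBS b (hTB b hb) (h' ▸ hoS)
    have hp2 : (Walk.cons hbo.symm (Walk.cons hyb.symm p)).IsPath := by
      rw [Walk.cons_isPath_iff]; exact ⟨hp1, hop1⟩
    have := hmax _ _ _ hp2 hoS
    simp only [Walk.length_cons, hplen] at this
    omega
  -- main case analysis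
  obtain ⟨b₀, hb₀, b₁, hb₁, b₂, hb₂, h01, h02, h12⟩ := three_distinct (hmin y hyS)
  have hyBs : y ∉ B := hSB y hyS
  have hsecond : ∀ b ∈ T, b ∈ p.support → b = x ∨ b = p.getVert 1 := by
    intro b hb hbp
    have hbB := hTB b hb
    refine second_or_last p hp hbp (fun h' => hBS b hbB (h' ▸ hyS)) (hnbrB b hbB) ?_
    obtain ⟨_, h'⟩ := Finset.mem_filter.mp hb
    rcases h' with h' | h'
    · exact Or.inl h'.symm
    · exact Or.inr h'.symm
  have doA : ∀ b b', b ∈ T → b' ∈ T → b ≠ b' → b ∉ p.support → b' ∉ p.support → Theta H := by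
    intro b b' hb hb' hbb' hbp hb'p
    obtain ⟨hoS, hbo, hoy⟩ := hoth b hb
    obtain ⟨hoS', hbo', hoy'⟩ := hoth b' hb'
    have hsp := cls b hb hbp
    have hsp' := cls b' hb' hb'p
    by_cases hss : oth b = oth b'
    · exact caseA1 hadjB hp hyBs (hSB _ hoS) (hTB b hb) (hTB b' hb') hbb' hbp hb'p
        (hTy b hb) hbo (hTy b' hb') (hss ▸ hbo') hsp hoy
    · rcases drop_dichotomy p (oth b) (oth b') hsp hsp' with hord | hord
      · exact caseA2 hadjB hp hyBs (hSB _ hoS) (hSB _ hoS') (hTB b hb) (hTB b' hb') hbb'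
          hbp hb'p (hTy b hb) hbo (hTy b' hb') hbo' hsp hoy hoy' hss hord
      · exact caseA2 hadjB hp hyBs (hSB _ hoS') (hSB _ hoS) (hTB b' hb') (hTB b hb)
          (Ne.symm hbb') hb'p hbp (hTy b' hb') hbo' (hTy b hb) hbo hsp' hoy' hoy
          (Ne.symm hss) hord
  have doB : ∀ b, b ∈ T → b ∉ p.support → H.Adj y x → x ∈ B → Theta H := by
    intro b hb hbp hyx hxB
    obtain ⟨hoS, hbo, hoy⟩ := hoth b hb
    exact caseB hadjB hp hyBs (hSB _ hoS) (hTB b hb) hxB hbp hyx (hTy b hb) hbo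
      (cls b hb hbp) hoy
  have main : Theta H := by
    have pickB : ∀ b b', b ∈ T → b' ∈ T → b ≠ b' → b ∈ p.support → b' ∈ p.support →
        ∀ b'', b'' ∈ T → b'' ∉ p.support → Theta H := by
      intro b b' hb hb' hbb' hbp hb'p b'' hb'' hb''p
      rcases hsecond b hb hbp with hbx | hbg
      · exact doB b'' hb'' hb''p (hbx ▸ hTy b hb) (hbx ▸ hTB b hb)
      · rcases hsecond b' hb' hb'p with hbx' | hb'g
        · exact doB b'' hb'' hb''p (hbx' ▸ hTy b' hb') (hbx' ▸ hTB b' hb')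
        · exact absurd (hbg.trans hb'g.symm) hbb'
    by_cases c0 : b₀ ∈ p.support <;> by_cases c1 : b₁ ∈ p.support <;>
      by_cases c2 : b₂ ∈ p.support
    · -- all on path: contradiction
      exfalso
      rcases hsecond b₀ hb₀ c0 with h0' | h0' <;>
        rcases hsecond b₁ hb₁ c1 with h1' | h1' <;>
        rcases hsecond b₂ hb₂ c2 with h2' | h2'
      · exact h01 (h0'.trans h1'.symm)
      · exact h01 (h0'.trans h1'.symm)
      · exact h02 (h0'.trans h2'.symm)
      · exact h12 (h1'.trans h2'.symm)
      · exact h12 (h1'.trans h2'.symm)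
      · exact h02 (h0'.trans h2'.symm)
      · exact h01 (h0'.trans h1'.symm)
      · exact h01 (h0'.trans h1'.symm)
    · exact pickB b₀ b₁ hb₀ hb₁ h01 c0 c1 b₂ hb₂ c2
    · exact pickB b₀ b₂ hb₀ hb₂ h02 c0 c2 b₁ hb₁ c1
    · exact doA b₁ b₂ hb₁ hb₂ h12 c1 c2
    · exact pickB b₁ b₂ hb₁ hb₂ h12 c1 c2 b₀ hb₀ c0
    · exact doA b₀ b₂ hb₀ hb₂ h02 c0 c2
    · exact doA b₀ b₁ hb₀ hb₁ h01 c0 c1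
    · exact doA b₀ b₁ hb₀ hb₁ h01 c0 c1
  -- transfer
  obtain ⟨a, b, q₁, q₂, q₃, hab, t1, t2, t3, l1, l2, l3, d12, d13, d23⟩ := main
  have he : ∀ {u v : V} (q : H.Walk u v), ∀ e ∈ q.edges, e ∈ G.edgeSet := by
    intro u v q e heq
    exact SimpleGraph.edgeSet_mono hHG (q.edges_subset_edgeSet heq)
  refine ⟨a, b, q₁.transfer G (he q₁), q₂.transfer G (he q₂), q₃.transfer G (he q₃), hab,
    t1.transfer _, t2.transfer _, t3.transfer _, ?_, ?_, ?_, ?_, ?_, ?_⟩ <;>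
    simp only [Walk.length_transfer, Walk.support_transfer] <;> assumption

lemma key_induction [Fintype V] [DecidableEq V] (G : SimpleGraph V) (n₁ n₂ : V → V) :
    ∀ S B : Finset V,
    (∀ x ∈ B, x ∉ S) →
    (∀ x ∈ B, n₁ x ∈ S ∧ G.Adj x (n₁ x)) →
    (∀ x ∈ B, n₂ x ∈ S ∧ G.Adj x (n₂ x)) →
    (∀ x ∈ B, n₁ x ≠ n₂ x) →
    Theta G ∨ B.card + 2 ≤ 2 * S.card ∨ B = ∅ := by
  intro S
  induction S using Finset.strongInduction with
  | _ S ih =>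
    intro B hBS h1 h2 hne
    by_cases hex : ∃ v ∈ S, (B.filter (fun x => n₁ x = v ∨ n₂ x = v)).card ≤ 2
    · obtain ⟨v, hv, hvc⟩ := hex
      set B' := B.filter (fun x => ¬(n₁ x = v ∨ n₂ x = v)) with hB'def
      have hB'B : ∀ x ∈ B', x ∈ B := fun x hx => (Finset.mem_filter.mp hx).1
      have hB'v : ∀ x ∈ B', n₁ x ≠ v ∧ n₂ x ≠ v := by
        intro x hx
        have := (Finset.mem_filter.mp hx).2
        push_neg at this
        exact this
      have hsplit : (B.filter (fun x => n₁ x = v ∨ n₂ x = v)).card + B'.card = B.card :=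
        Finset.card_filter_add_card_filter_not _
      have hScard : 1 ≤ S.card := Finset.card_pos.mpr ⟨v, hv⟩
      have hrec := ih (S.erase v) (Finset.erase_ssubset hv) B'
        (fun x hx hxe => hBS x (hB'B x hx) (Finset.mem_of_mem_erase hxe))
        (fun x hx => ⟨Finset.mem_erase.mpr ⟨(hB'v x hx).1, (h1 x (hB'B x hx)).1⟩,
          (h1 x (hB'B x hx)).2⟩)
        (fun x hx => ⟨Finset.mem_erase.mpr ⟨(hB'v x hx).2, (h2 x (hB'B x hx)).1⟩,
          (h2 x (hB'B x hx)).2⟩)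
        (fun x hx => hne x (hB'B x hx))
      rw [Finset.card_erase_of_mem hv] at hrec
      rcases hrec with ht | hc | hemp
      · exact Or.inl ht
      · right; left; omega
      · by_cases hBe : B = ∅
        · exact Or.inr (Or.inr hBe)
        · obtain ⟨b, hb⟩ := Finset.nonempty_of_ne_empty hBe
          have hS2 : 1 < S.card := Finset.one_lt_card.mpr
            ⟨n₁ b, (h1 b hb).1, n₂ b, (h2 b hb).1, hne b hb⟩
          have hBc : B'.card = 0 := by rw [hemp]; simp
          right; left; omega
    · push_neg at hex
      by_cases hSe : S.Nonempty
      · exact Or.inl (mindeg_theta G S B n₁ n₂ hBS h1 h2 hne hSe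
          (fun v hv => by have := hex v hv; omega))
      · rw [Finset.not_nonempty_iff_eq_empty] at hSe
        refine Or.inr (Or.inr (Finset.eq_empty_iff_forall_notMem.mpr fun x hx => ?_))
        have := (h1 x hx).1
        rw [hSe] at this
        exact Finset.notMem_empty _ this

/-- Every 2-dominating set of an outerplanar graph on `n ≥ 3` vertices has at least
`⌈(n+2)/3⌉ = (n+4)/3` vertices. -/
theorem twoDom_lower_bound_outerplanar [Fintype V] (G : SimpleGraph V)
    (hG : Outerplanar G) (hn : 3 ≤ Fintype.card V)
    (S : Set V) (hS : TwoDom G S) :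
    (Fintype.card V + 4) / 3 ≤ S.ncard := by
  classical
  have hpick : ∀ x : V, ∃ a b : V, x ∉ S →
      (a ∈ S ∧ G.Adj x a) ∧ (b ∈ S ∧ G.Adj x b) ∧ a ≠ b := by
    intro x
    by_cases hx : x ∈ S
    · exact ⟨x, x, fun h => absurd hx h⟩
    · have h2 := hS x hx
      have hfin : (S ∩ G.neighborSet x).Finite := Set.toFinite _
      rw [show (2 : ℕ) ≤ (S ∩ G.neighborSet x).ncard ↔
        1 < (S ∩ G.neighborSet x).ncard from Iff.rfl, Set.one_lt_ncard_iff hfin] at h2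
      obtain ⟨a, b, ha, hb, hab⟩ := h2
      exact ⟨a, b, fun _ => ⟨⟨ha.1, ha.2⟩, ⟨hb.1, hb.2⟩, hab⟩⟩
  choose n₁ n₂ hn12 using hpick
  set Sf := S.toFinset with hSfdef
  set Bf := Finset.univ \ Sf with hBfdef
  have hmem : ∀ x ∈ Bf, x ∉ S := by
    intro x hx
    rw [hBfdef, Finset.mem_sdiff] at hx
    rw [← Set.mem_toFinset]
    exact hx.2
  have hcardS : S.ncard = Sf.card := Set.ncard_eq_toFinset_card' S
  have hcardB : Bf.card = Fintype.card V - Sf.card := by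
    rw [hBfdef, Finset.card_sdiff_of_subset (Finset.subset_univ _), Finset.card_univ]
  have hSle : Sf.card ≤ Fintype.card V := Finset.card_le_univ _
  rcases key_induction G n₁ n₂ Sf Bf
    (fun x hx hxS => hmem x hx (Set.mem_toFinset.mp hxS))
    (fun x hx => ⟨Set.mem_toFinset.mpr ((hn12 x (hmem x hx)).1.1),
      (hn12 x (hmem x hx)).1.2⟩)
    (fun x hx => ⟨Set.mem_toFinset.mpr ((hn12 x (hmem x hx)).2.1.1),
      (hn12 x (hmem x hx)).2.1.2⟩)
    (fun x hx => (hn12 x (hmem x hx)).2.2) with ht | hc | hemp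
  · exact absurd (theta_csd ht) hG.2
  · omega
  · have : Sf = Finset.univ := by
      have := Finset.sdiff_eq_empty_iff_subset.mp hemp
      exact Finset.eq_univ_of_forall (fun x => this (Finset.mem_univ x))
    rw [hcardS, this, Finset.card_univ]
    omega
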